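/- For a polytope P ⊂ R^d and a d×d matrix A with rows h₁,…,h_d, if B is the matrix with rows h₁,…,h_{d−1}, −(h₁+⋯+h_d), then l₁(AP) = l₁(BP). -/

import Mathlib

open scoped BigOperators

/-- Lattice width of a set `P ⊆ ℝ^d` in direction `h`:
`max_{x∈P} ⟨h,x⟩ − min_{x∈P} ⟨h,x⟩`. -/
noncomputable def width {d : ℕ} (P : Set (Fin d → ℝ)) (h : Fin d → ℝ) : ℝ :=
  sSup ((fun x => ∑ i, h i * x i) '' P) - sInf ((fun x => ∑ i, h i * x i) '' P)

/-- `l₁(P) = max_{x∈P}(x₁+⋯+x_d) − Σᵢ min_{x∈P} xᵢ`. -/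
noncomputable def l1 {d : ℕ} (P : Set (Fin d → ℝ)) : ℝ :=
  sSup ((fun x => ∑ i, x i) '' P) - ∑ i, sInf ((fun x => x i) '' P)

/-- `P` is a lattice polytope: the convex hull of a nonempty finite set of integer points. -/
def IsLatticePolytope {d : ℕ} (P : Set (Fin d → ℝ)) : Prop :=
  ∃ V : Finset (Fin d → ℝ), V.Nonempty ∧ (∀ v ∈ V, ∀ i, ∃ m : ℤ, v i = (m : ℝ)) ∧
    P = convexHull ℝ (V : Set (Fin d → ℝ))

/-- `P` is a polytope: the convex hull of a nonempty finite set of points. -/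
def IsPolytope {d : ℕ} (P : Set (Fin d → ℝ)) : Prop :=
  ∃ V : Finset (Fin d → ℝ), V.Nonempty ∧ P = convexHull ℝ (V : Set (Fin d → ℝ))

lemma myInf_neg (s : Set ℝ) : sInf ((fun x => -x) '' s) = -sSup s := by
  rw [Set.image_neg_eq_neg, Real.sInf_def, neg_neg]

lemma mySup_neg (s : Set ℝ) : sSup ((fun x => -x) '' s) = -sInf s := by
  rw [Set.image_neg_eq_neg, Real.sInf_def, neg_neg]

lemma l1_image_mulVec {d : ℕ} (P : Set (Fin d → ℝ)) (M : Matrix (Fin d) (Fin d) ℝ) :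
    l1 ((fun x => M.mulVec x) '' P)
      = sSup ((fun x => ∑ j, (∑ i, M i j) * x j) '' P)
        - ∑ i, sInf ((fun x => ∑ j, M i j * x j) '' P) := by
  have hm : (fun x : Fin d → ℝ => ∑ i, M.mulVec x i)
      = fun x => ∑ j, (∑ i, M i j) * x j := by
    funext x
    simp only [Matrix.mulVec, dotProduct]
    rw [Finset.sum_comm]
    simp [Finset.sum_mul]
  have hm2 : ∀ i, (fun x : Fin d → ℝ => M.mulVec x i) = fun x => ∑ j, M i j * x j := by
    intro i; rfl
  simp only [l1, Set.image_image, hm, hm2]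

/-- replacing the last row of `A` by minus the sum of all rows of `A`
does not change `l₁` of the image: `l₁(AP) = l₁(BP)`. -/
theorem l1_image_eq_of_last_row_replaced (d : ℕ) (P : Set (Fin d → ℝ)) (hP : IsPolytope P)
    (A B : Matrix (Fin d) (Fin d) ℝ)
    (hB : ∀ i : Fin d, B i = if (i : ℕ) < d - 1 then A i else -(∑ j, A j)) :
    l1 ((fun x => A.mulVec x) '' P) = l1 ((fun x => B.mulVec x) '' P) := by
  rcases Nat.eq_zero_or_pos d with hd | hd
  · subst hd
    have : (fun x : Fin 0 → ℝ => A.mulVec x) = fun x => B.mulVec x := by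
      funext x
      funext i
      exact i.elim0
    rw [this]
  · have hd1 : d - 1 < d := by omega
    set L : Fin d := ⟨d - 1, hd1⟩ with hL
    have hBL : B L = -(∑ j, A j) := by
      rw [hB L, if_neg]; exact lt_irrefl (d - 1)
    have hBi : ∀ i : Fin d, i ≠ L → B i = A i := by
      intro i hi
      rw [hB i, if_pos]
      have h1 : (i : ℕ) ≠ d - 1 := fun h => hi (Fin.ext h)
      have := i.isLt
      omega
    have hτ : ∀ j, (∑ i, B i j) = -(A L j) := by
      intro j
      rw [← Finset.add_sum_erase _ (fun i => B i j) (Finset.mem_univ L),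
        Finset.sum_congr rfl (fun i hi => by
          rw [hBi i (Finset.ne_of_mem_erase hi)]),
        hBL]
      have h3 : (∑ k, A k j) = A L j + ∑ i ∈ Finset.univ.erase L, A i j :=
        (Finset.add_sum_erase _ (fun i => A i j) (Finset.mem_univ L)).symm
      erw [Pi.neg_apply, Finset.sum_apply, h3]
      ring
    rw [l1_image_mulVec, l1_image_mulVec]
    -- abbreviations
    set SA := sSup ((fun x : Fin d → ℝ => ∑ j, (∑ i, A i j) * x j) '' P) with hSA
    have e1 : (fun x : Fin d → ℝ => ∑ j, (∑ i, B i j) * x j)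
        = (fun x => -(∑ j, A L j * x j)) := by
      funext x
      rw [← Finset.sum_neg_distrib]
      exact Finset.sum_congr rfl fun j _ => by rw [hτ j]; ring
    have e2 : (fun x : Fin d → ℝ => ∑ j, B L j * x j)
        = (fun x => -(∑ j, (∑ i, A i j) * x j)) := by
      funext x
      rw [← Finset.sum_neg_distrib]
      refine Finset.sum_congr rfl fun j _ => ?_
      rw [hBL]
      erw [Pi.neg_apply, Finset.sum_apply]
      ring
    have h1 : sSup ((fun x : Fin d → ℝ => ∑ j, (∑ i, B i j) * x j) '' P)
        = -sInf ((fun x : Fin d → ℝ => ∑ j, A L j * x j) '' P) := by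
      rw [e1, ← Set.image_image]
      exact mySup_neg _
    have h2 : sInf ((fun x : Fin d → ℝ => ∑ j, B L j * x j) '' P) = -SA := by
      rw [e2, ← Set.image_image, hSA]
      exact myInf_neg _
    have splitA : (∑ i, sInf ((fun x : Fin d → ℝ => ∑ j, A i j * x j) '' P))
        = sInf ((fun x : Fin d → ℝ => ∑ j, A L j * x j) '' P)
          + ∑ i ∈ Finset.univ.erase L, sInf ((fun x : Fin d → ℝ => ∑ j, A i j * x j) '' P) :=
      (Finset.add_sum_erase _ (fun i => sInf ((fun x : Fin d → ℝ => ∑ j, A i j * x j) '' P))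
        (Finset.mem_univ L)).symm
    have splitB : (∑ i, sInf ((fun x : Fin d → ℝ => ∑ j, B i j * x j) '' P))
        = sInf ((fun x : Fin d → ℝ => ∑ j, B L j * x j) '' P)
          + ∑ i ∈ Finset.univ.erase L, sInf ((fun x : Fin d → ℝ => ∑ j, A i j * x j) '' P) := by
      rw [← Finset.add_sum_erase _ (fun i => sInf ((fun x : Fin d → ℝ => ∑ j, B i j * x j) '' P))
        (Finset.mem_univ L)]
      congr 1
      exact Finset.sum_congr rfl fun i hi => by rw [hBi i (Finset.ne_of_mem_erase hi)]
    rw [h1, splitA, splitB, h2]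
    ring
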